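/- Let n ≥ 3 and let σ, τ ∈ S_n have McMahon codes s and t respectively, with an index f, 2 ≤ f ≤ n−1, such that t_i = s_i for all i except t_f = s_f − 1 and t_{f+1} = s_{f+1} + 1. Suppose moreover there is a j with 0 ≤ j ≤ f−1 such that s_i = t_i = 0 for j < i ≤ f−1, and, if j > 0, then s_j = t_j ≠ 0 and s_i = t_i = i−1 for 1 ≤ i < j. Then τ = σ·⟨φ_j(f+1), φ_j(s_f)⟩, where φ_j(i) = j − s_j − i if 1 ≤ i ≤ j − (s_j + 1), φ_j(i) = 2j − s_j − i if j − (s_j + 1) < i ≤ j, and φ_j(i) = i if i > j. -/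
import Mathlib


/-- `rot u k` is the permutation `[[u,k]]` of `{1,…,u} ⊆ ℕ` obtained by `k`
right circular shifts of the first `u` entries of the identity (positions are
1-based; all other natural numbers are fixed): `[[u,k]] i = u - k + i` for
`1 ≤ i ≤ k`, `[[u,k]] i = i - k` for `k < i ≤ u` and `[[u,k]] i = i` for `i > u`.
It is (junk-)defined as the identity when `¬ k < u`. -/
def rot (u k : ℕ) : Equiv.Perm ℕ :=
  if _h : k < u then
    { toFun := fun i =>
        if 1 ≤ i ∧ i ≤ k then u - k + i
        else if k < i ∧ i ≤ u then i - k
        else i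
      invFun := fun j =>
        if u - k + 1 ≤ j ∧ j ≤ u then j - (u - k)
        else if 1 ≤ j ∧ j ≤ u - k then j + k
        else j
      left_inv := by intro i; dsimp only; split_ifs <;> omega
      right_inv := by intro j; dsimp only; split_ifs <;> omega }
  else 1

/-- `psi n t = [[n, t n]] · [[n-1, t (n-1)]] · ⋯ · [[2, t 2]] · [[1, t 1]]`, where
permutations act on indices, i.e. `(σ * τ) i = σ (τ i)`.  When `t` is a subexcedant
sequence of length `n`, `t` is called the McMahon code of the permutation `psi n t`. -/
def psi (n : ℕ) (t : ℕ → ℕ) : Equiv.Perm ℕ :=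
  ((List.range n).reverse.map (fun i => rot (i + 1) (t (i + 1)))).prod

/-- `c` is a subexcedant sequence of length `n`: `0 ≤ c i ≤ i - 1` for `1 ≤ i ≤ n`
(positions are 1-based). -/
def Subexcedant (n : ℕ) (c : ℕ → ℕ) : Prop :=
  ∀ i, 1 ≤ i → i ≤ n → c i ≤ i - 1

/-- The major index of a permutation of `{1,…,n}`:
`maj π = ∑_{1 ≤ i < n, π i > π (i+1)} i`. -/
def maj (n : ℕ) (π : Equiv.Perm ℕ) : ℕ :=
  ∑ i ∈ Finset.Ico 1 n, if π (i + 1) < π i then i else 0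

/-- The map `φ_j` of Proposition 6 of the paper (here `sj` stands for `s j`):
`φ_j i = j - sj - i` if `1 ≤ i ≤ j - (sj + 1)`, `φ_j i = 2j - sj - i` if
`j - (sj + 1) < i ≤ j`, and `φ_j i = i` if `i > j`. -/
def phiFn (j sj : ℕ) (i : ℕ) : ℕ :=
  if 1 ≤ i ∧ i ≤ j - (sj + 1) then j - sj - i
  else if j - (sj + 1) < i ∧ i ≤ j then 2 * j - sj - i
  else i

lemma rot_apply (u k i : ℕ) (h : k < u) :
    rot u k i = if 1 ≤ i ∧ i ≤ k then u - k + i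
      else if k < i ∧ i ≤ u then i - k else i := by
  unfold rot; rw [dif_pos h]; rfl

lemma rot_zero (u : ℕ) : rot u 0 = 1 := by
  ext i
  rcases Nat.eq_zero_or_pos u with h | h
  · simp [rot, h]
  · rw [rot_apply u 0 i h]; simp only [Equiv.Perm.coe_one, id_eq]; split_ifs <;> omega

lemma psi_zero (s : ℕ → ℕ) : psi 0 s = 1 := by simp [psi]

lemma psi_succ (m : ℕ) (s : ℕ → ℕ) :
    psi (m + 1) s = rot (m + 1) (s (m + 1)) * psi m s := by
  simp [psi, List.range_succ]

lemma rot_fix (u k i : ℕ) (h : u < i) : rot u k i = i := by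
  by_cases hk : k < u
  · rw [rot_apply _ _ _ hk]; split_ifs <;> omega
  · simp [rot, hk]

lemma psi_fix (m : ℕ) (s : ℕ → ℕ) (i : ℕ) (h : m < i) : psi m s i = i := by
  induction m with
  | zero => simp [psi_zero]
  | succ m ih =>
    rw [psi_succ, Equiv.Perm.mul_apply, ih (by omega), rot_fix _ _ _ h]

lemma psi_congr (m : ℕ) (s t : ℕ → ℕ) (h : ∀ i, 1 ≤ i → i ≤ m → s i = t i) :
    psi m s = psi m t := by
  induction m with
  | zero => simp [psi_zero]
  | succ m ih =>
    rw [psi_succ, psi_succ, h (m + 1) (by omega) le_rfl,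
      ih fun i h1 h2 => h i h1 (by omega)]

lemma psi_rev (m : ℕ) (s : ℕ → ℕ) (h : ∀ i, 1 ≤ i → i ≤ m → s i = i - 1) (i : ℕ) :
    psi m s i = if 1 ≤ i ∧ i ≤ m then m + 1 - i else i := by
  induction m with
  | zero =>
    rw [psi_zero]
    simp only [Equiv.Perm.coe_one, id_eq]
    split_ifs <;> omega
  | succ m ih =>
    rw [psi_succ, Equiv.Perm.mul_apply,
      ih (fun i h1 h2 => h i h1 (by omega)), h (m + 1) (by omega) le_rfl]
    rw [rot_apply _ _ _ (by omega)]
    split_ifs <;> omega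

set_option maxHeartbeats 1600000 in
lemma star (f k m : ℕ) (hk1 : 1 ≤ k) (hk : k ≤ f - 1) (hm : m ≤ f - 1) (hf : 2 ≤ f) :
    rot (f + 1) (m + 1) * rot f (k - 1) =
      rot (f + 1) m * rot f k * Equiv.swap (f + 1) k := by
  ext i
  simp only [Equiv.Perm.mul_apply, Equiv.swap_apply_def]
  rw [rot_apply f (k - 1) _ (by omega), rot_apply (f + 1) (m + 1) _ (by omega),
    rot_apply f k _ (by omega), rot_apply (f + 1) m _ (by omega)]
  split_ifs <;> omega

lemma phi_invol (j sj i : ℕ) (hsj : 0 < j → sj ≤ j - 1) :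
    phiFn j sj (phiFn j sj i) = i := by
  rcases Nat.eq_zero_or_pos j with hj | hj
  · subst hj; unfold phiFn; split_ifs <;> omega
  · have := hsj hj; unfold phiFn; split_ifs <;> omega

lemma psi_stall (j m : ℕ) (s : ℕ → ℕ) (hm : j ≤ m)
    (h : ∀ i, j < i → i ≤ m → s i = 0) : psi m s = psi j s := by
  induction m with
  | zero =>
    obtain rfl : j = 0 := Nat.le_zero.mp hm
    rfl
  | succ m ih =>
    rcases Nat.eq_or_lt_of_le hm with h' | h'
    · rw [h']
    · rw [psi_succ, h (m + 1) (by omega) le_rfl, rot_zero, one_mul,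
        ih (by omega) (fun i a b => h i a (by omega))]

lemma psi_phi (f j : ℕ) (s : ℕ → ℕ) (hjf : j ≤ f - 1)
    (hzero : ∀ i, j < i → i ≤ f - 1 → s i = 0)
    (hjpos : 0 < j → s j ≤ j - 1 ∧ ∀ i, 1 ≤ i → i < j → s i = i - 1) (i : ℕ) :
    psi (f - 1) s i = phiFn j (s j) i := by
  rw [psi_stall j (f - 1) s hjf hzero]
  rcases Nat.eq_zero_or_pos j with hj | hj
  · subst hj
    rw [psi_zero]
    simp only [Equiv.Perm.coe_one, id_eq]
    unfold phiFn
    split_ifs <;> omega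
  · obtain ⟨J, rfl⟩ : ∃ J, j = J + 1 := ⟨j - 1, by omega⟩
    obtain ⟨h1, h2⟩ := hjpos hj
    rw [psi_succ, Equiv.Perm.mul_apply,
      psi_rev J s (fun i a b => h2 i a (by omega)),
      rot_apply _ _ _ (by omega)]
    unfold phiFn
    split_ifs <;> omega


/-- let `σ, τ ∈ S_n` (`n ≥ 3`) have McMahon codes `s`, `t` agreeing
everywhere except that `t f = s f - 1` and `t (f+1) = s (f+1) + 1` for some
`2 ≤ f ≤ n-1`.  Suppose moreover there is `0 ≤ j ≤ f-1` with `s i = t i = 0` for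
`j < i ≤ f-1` and, if `j > 0`, `s j = t j ≠ 0` and `s i = t i = i - 1` for
`1 ≤ i < j`.  Then `τ = σ · ⟨φ_j (f+1), φ_j (s f)⟩`. -/
theorem mcmahon_adjacent_transfer_phi (n f j : ℕ) (s t : ℕ → ℕ) (σ τ : Equiv.Perm ℕ)
    (hn : 3 ≤ n) (hs : Subexcedant n s) (ht : Subexcedant n t)
    (hσ : σ = psi n s) (hτ : τ = psi n t)
    (hf1 : 2 ≤ f) (hf2 : f ≤ n - 1)
    (heq : ∀ i, i ≠ f → i ≠ f + 1 → t i = s i)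
    (hft : t f + 1 = s f) (hft1 : t (f + 1) = s (f + 1) + 1)
    (hjf : j ≤ f - 1)
    (hzero : ∀ i, j < i → i ≤ f - 1 → s i = 0 ∧ t i = 0)
    (hjpos : 0 < j → s j = t j ∧ s j ≠ 0 ∧ ∀ i, 1 ≤ i → i < j → s i = i - 1 ∧ t i = i - 1) :
    τ = σ * Equiv.swap (phiFn j (s j) (f + 1)) (phiFn j (s j) (s f)) := by
  subst hσ hτ
  set a := phiFn j (s j) (f + 1) with ha_def
  set b := phiFn j (s j) (s f) with hb_def
  set k := s f with hk_def
  have hk1 : 1 ≤ k := by omega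
  have hkf : k ≤ f - 1 := hs f (by omega) (by omega)
  have hm : s (f + 1) ≤ f - 1 := by
    have := ht (f + 1) (by omega) (by omega); omega
  have hsjb : 0 < j → s j ≤ j - 1 := fun hj => hs j (by omega) (by omega)
  have hphi : ∀ i, psi (f - 1) s i = phiFn j (s j) i :=
    psi_phi f j s hjf (fun i x y => (hzero i x y).1)
      (fun hj => ⟨hsjb hj, fun i x y => ((hjpos hj).2.2 i x y).1⟩)
  have hBa : psi (f - 1) s a = f + 1 := by
    rw [hphi, ha_def, phi_invol j (s j) (f + 1) hsjb]
  have hBb : psi (f - 1) s b = k := by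
    rw [hphi, hb_def, phi_invol j (s j) k hsjb]
  have hBeq : psi (f - 1) t = psi (f - 1) s :=
    psi_congr _ _ _ (fun i h1 h2 => heq i (by omega) (by omega))
  have hswap : psi (f - 1) s * Equiv.swap a b = Equiv.swap (f + 1) k * psi (f - 1) s := by
    rw [Equiv.mul_swap_eq_swap_mul, hBa, hBb]
  have core : psi (f + 1) t = psi (f + 1) s * Equiv.swap a b := by
    obtain ⟨F, rfl⟩ : ∃ F, f = F + 2 := ⟨f - 2, by omega⟩
    have e1 : F + 2 - 1 = F + 1 := rfl
    rw [show F + 2 + 1 = F + 1 + 1 + 1 from rfl, psi_succ (F + 1 + 1) t,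
      psi_succ (F + 1) t, psi_succ (F + 1 + 1) s, psi_succ (F + 1) s]
    rw [show (F + 1 : ℕ) = F + 2 - 1 from rfl] at *
    rw [hBeq]
    have hstar : rot (F + 2 + 1) (t (F + 2 + 1)) * rot (F + 2) (t (F + 2)) =
        rot (F + 2 + 1) (s (F + 2 + 1)) * rot (F + 2) (s (F + 2)) *
          Equiv.swap (F + 2 + 1) k := by
      rw [hft1, show t (F + 2) = k - 1 by omega, hk_def]
      exact star (F + 2) k (s (F + 2 + 1)) hk1 hkf hm (by omega)
    calc rot (F + 2 + 1) (t (F + 2 + 1)) *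
          (rot (F + 2) (t (F + 2)) * psi (F + 2 - 1) s)
        = (rot (F + 2 + 1) (t (F + 2 + 1)) * rot (F + 2) (t (F + 2))) *
            psi (F + 2 - 1) s := by rw [mul_assoc]
      _ = rot (F + 2 + 1) (s (F + 2 + 1)) * rot (F + 2) (s (F + 2)) *
            (Equiv.swap (F + 2 + 1) k * psi (F + 2 - 1) s) := by
            rw [hstar]; group
      _ = rot (F + 2 + 1) (s (F + 2 + 1)) * rot (F + 2) (s (F + 2)) *
            (psi (F + 2 - 1) s * Equiv.swap a b) := by rw [hswap]
      _ = rot (F + 2 + 1) (s (F + 2 + 1)) *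
            (rot (F + 2) (s (F + 2)) * psi (F + 2 - 1) s) * Equiv.swap a b := by
            group
  have step : ∀ d, psi (f + 1 + d) t = psi (f + 1 + d) s * Equiv.swap a b := by
    intro d
    induction d with
    | zero => exact core
    | succ d ih =>
      rw [show f + 1 + (d + 1) = (f + 1 + d) + 1 from rfl, psi_succ, psi_succ,
        heq (f + 1 + d + 1) (by omega) (by omega), ih, mul_assoc]
  have := step (n - (f + 1))
  rwa [show f + 1 + (n - (f + 1)) = n by omega] at this
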